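/- Let u, u' : [0, τ] → ℝ be continuous with u ≠ u'. Then there exists ν ≥ 1 such that the solutions y, y' of y^{(ν)} = u and y'^{(ν)} = u' with zero initial conditions at 0 satisfy y(τ) ≠ y'(τ). (Consequence of the Cauchy formula and Lerch's theorem: the family of maps u ↦ y(τ) over all ν separates distinct inputs.) -/

import Mathlib

open MeasureTheory intervalIntegral Polynomial

theorem iterated_integrals_separate
    (τ : ℝ) (hτ : τ > 0) (u u' : ℝ → ℝ)
    (hu : ContinuousOn u (Set.Icc 0 τ)) (hu' : ContinuousOn u' (Set.Icc 0 τ))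
    (hne : ∃ x ∈ Set.Icc (0:ℝ) τ, u x ≠ u' x) :
    ∃ ν : ℕ, 1 ≤ ν ∧
      (1 / (Nat.factorial (ν - 1) : ℝ)) * (∫ σ in (0:ℝ)..τ, (τ - σ) ^ (ν - 1) * u σ) ≠
      (1 / (Nat.factorial (ν - 1) : ℝ)) * ∫ σ in (0:ℝ)..τ, (τ - σ) ^ (ν - 1) * u' σ := by
  by_contra h
  push_neg at h
  set g : ℝ → ℝ := fun x => u x - u' x with hgdef
  have huIcc : Set.uIcc (0:ℝ) τ = Set.Icc 0 τ := Set.uIcc_of_le hτ.le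
  have hgc : ContinuousOn g (Set.Icc 0 τ) := hu.sub hu'
  have hint : ∀ (f : ℝ → ℝ), ContinuousOn f (Set.Icc 0 τ) →
      IntervalIntegrable f volume 0 τ := by
    intro f hf
    exact (huIcc ▸ hf).intervalIntegrable
  have hpowc : ∀ n : ℕ, ContinuousOn (fun σ : ℝ => (τ - σ) ^ n) (Set.Icc 0 τ) :=
    fun n => (continuous_const.sub continuous_id).continuousOn.pow n
  -- all "moments" against (τ - σ)^n of g vanish
  have key : ∀ n : ℕ, (∫ σ in (0:ℝ)..τ, (τ - σ) ^ n * g σ) = 0 := by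
    intro n
    have h1 := h (n + 1) (by omega)
    simp only [Nat.add_sub_cancel] at h1
    have hf : (1 / (Nat.factorial n : ℝ)) ≠ 0 :=
      one_div_ne_zero (by exact_mod_cast (Nat.factorial_pos n).ne')
    have h2 : (∫ σ in (0:ℝ)..τ, (τ - σ) ^ n * u σ) =
        ∫ σ in (0:ℝ)..τ, (τ - σ) ^ n * u' σ := mul_left_cancel₀ hf h1
    have h3 : (∫ σ in (0:ℝ)..τ, (τ - σ) ^ n * g σ) =
        (∫ σ in (0:ℝ)..τ, (τ - σ) ^ n * u σ) -
        ∫ σ in (0:ℝ)..τ, (τ - σ) ^ n * u' σ := by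
      rw [← intervalIntegral.integral_sub
        (hint (fun σ => (τ - σ) ^ n * u σ) ((hpowc n).mul hu)) (hint (fun σ => (τ - σ) ^ n * u' σ) ((hpowc n).mul hu'))]
      congr 1; ext σ; simp [g, mul_sub]
    rw [h3, h2, sub_self]
  -- integrals of g against all polynomials vanish
  have poly : ∀ p : ℝ[X], (∫ σ in (0:ℝ)..τ, p.eval σ * g σ) = 0 := by
    intro p
    set q : ℝ[X] := p.comp (Polynomial.C τ - Polynomial.X) with hq
    have hqe : ∀ σ : ℝ, q.eval (τ - σ) = p.eval σ := by
      intro σ; simp [hq, Polynomial.eval_comp]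
    have e1 : (∫ σ in (0:ℝ)..τ, p.eval σ * g σ) =
        ∫ σ in (0:ℝ)..τ, ∑ i ∈ Finset.range (q.natDegree + 1),
          q.coeff i * ((τ - σ) ^ i * g σ) := by
      congr 1; ext σ
      rw [← hqe σ, Polynomial.eval_eq_sum_range, Finset.sum_mul]
      simp [mul_assoc]
    rw [e1, intervalIntegral.integral_finset_sum]
    · refine Finset.sum_eq_zero fun i _ => ?_
      rw [intervalIntegral.integral_const_mul, key i, mul_zero]
    · intro i _
      exact (hint _ (((hpowc i).mul hgc).const_smul (q.coeff i)))
  -- hence ∫ g² = 0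
  obtain ⟨M, hM⟩ := (isCompact_Icc).exists_bound_of_continuousOn hgc
  have hM0 : 0 ≤ M := le_trans (norm_nonneg _) (hM 0 ⟨le_refl 0, hτ.le⟩)
  have hsq : (∫ σ in (0:ℝ)..τ, g σ * g σ) = 0 := by
    have hub : ∀ ε : ℝ, 0 < ε → |∫ σ in (0:ℝ)..τ, g σ * g σ| ≤ ε := by
      intro ε hε
      set δ : ℝ := ε / (M * τ + 1) with hδdef
      have hMτ : 0 < M * τ + 1 := by positivity
      have hδ : 0 < δ := div_pos hε hMτ
      obtain ⟨p, hp⟩ := exists_polynomial_near_of_continuousOn 0 τ g hgc δ hδ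
      have e2 : (∫ σ in (0:ℝ)..τ, g σ * g σ) =
          ∫ σ in (0:ℝ)..τ, (g σ - p.eval σ) * g σ := by
        calc (∫ σ in (0:ℝ)..τ, g σ * g σ)
            = (∫ σ in (0:ℝ)..τ, g σ * g σ) - ∫ σ in (0:ℝ)..τ, p.eval σ * g σ := by
              rw [poly p, sub_zero]
          _ = ∫ σ in (0:ℝ)..τ, (g σ - p.eval σ) * g σ := by
              rw [← intervalIntegral.integral_sub (hint (fun σ => g σ * g σ) (hgc.mul hgc))
                (hint (fun σ => p.eval σ * g σ) ((Polynomial.continuous p).continuousOn.mul hgc))]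
              congr 1; ext σ; ring
      have hbound : ∀ x ∈ Set.uIoc (0:ℝ) τ, ‖(g x - p.eval x) * g x‖ ≤ δ * M := by
        intro x hx
        have hx' : x ∈ Set.Icc 0 τ := by
          rw [← huIcc]; exact Set.uIoc_subset_uIcc hx
        rw [norm_mul]
        exact mul_le_mul (le_of_lt (by rw [← norm_neg, neg_sub]; exact hp x hx'))
          (hM x hx') (norm_nonneg _) hδ.le
      calc |∫ σ in (0:ℝ)..τ, g σ * g σ|
          = ‖∫ σ in (0:ℝ)..τ, (g σ - p.eval σ) * g σ‖ := by rw [e2]; rfl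
        _ ≤ δ * M * |τ - 0| :=
            intervalIntegral.norm_integral_le_of_norm_le_const hbound
        _ = δ * (M * τ) := by rw [sub_zero, abs_of_pos hτ]; ring
        _ ≤ ε := by
            rw [hδdef, div_mul_eq_mul_div, div_le_iff₀ hMτ]
            nlinarith [mul_nonneg hM0 hτ.le]
    have := le_of_forall_pos_le_add (a := |∫ σ in (0:ℝ)..τ, g σ * g σ|) (b := 0)
      (fun ε hε => by simpa using hub ε hε)
    exact abs_eq_zero.mp (le_antisymm this (abs_nonneg _))
  -- but g² has positive integral since g is not identically zero
  obtain ⟨x₀, hx₀, hx₀ne⟩ := hne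
  have hgx₀ : g x₀ ≠ 0 := sub_ne_zero_of_ne hx₀ne
  have hpos : (∫ σ in (0:ℝ)..τ, (0:ℝ)) < ∫ σ in (0:ℝ)..τ, g σ * g σ := by
    apply intervalIntegral.integral_lt_integral_of_continuousOn_of_le_of_exists_lt hτ
      continuousOn_const (hgc.mul hgc)
    · intro x hx; exact mul_self_nonneg _
    · exact ⟨x₀, hx₀, mul_self_pos.mpr hgx₀⟩
  rw [hsq, intervalIntegral.integral_const, smul_zero] at hpos
  exact lt_irrefl _ hpos
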